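/- Over the field 𝔽_p, the polynomial p(x,y) = (x² − 1)y − 1 is not HIP: substituting x ↦ x^p and y ↦ y^p yields (x^{2p} − 1)y^p − 1 = ((x² − 1)y)^p − 1, which is reducible in 𝔽_p[x,y] (being divisible by (x² − 1)y − 1). -/
import Mathlib


open Polynomial

/-- The substitution `x ↦ f(x)`, `y ↦ g(y)` on `p ∈ K[x][y]`. -/
noncomputable def substXY {K : Type*} [Field K] (f g : Polynomial K)
    (p : Polynomial (Polynomial K)) : Polynomial (Polynomial K) :=
  (p.map (Polynomial.aeval f).toRingHom).comp (g.map Polynomial.C)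

/-- Remark after Theorem 2.10: over `𝔽_p` the polynomial `(x² - 1)y - 1` is not HIP:
substituting `x ↦ x^p`, `y ↦ y^p` gives `(x^{2p} - 1)y^p - 1 = ((x² - 1)y)^p - 1`,
which is divisible by `(x² - 1)y - 1` and reducible. -/
theorem stmt9 (p : ℕ) [Fact p.Prime] :
    substXY ((X : Polynomial (ZMod p)) ^ p) ((X : Polynomial (ZMod p)) ^ p)
        (Polynomial.C ((X : Polynomial (ZMod p)) ^ 2 - 1) * Polynomial.X - 1)
      = (Polynomial.C ((X : Polynomial (ZMod p)) ^ 2 - 1) * Polynomial.X) ^ p - 1 ∧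
    (Polynomial.C ((X : Polynomial (ZMod p)) ^ 2 - 1) * Polynomial.X - 1) ∣
      substXY ((X : Polynomial (ZMod p)) ^ p) ((X : Polynomial (ZMod p)) ^ p)
        (Polynomial.C ((X : Polynomial (ZMod p)) ^ 2 - 1) * Polynomial.X - 1) ∧
    ¬ Irreducible
      (substXY ((X : Polynomial (ZMod p)) ^ p) ((X : Polynomial (ZMod p)) ^ p)
        (Polynomial.C ((X : Polynomial (ZMod p)) ^ 2 - 1) * Polynomial.X - 1)) := by
  have hp := (Fact.out : p.Prime)
  have key : substXY ((X : Polynomial (ZMod p)) ^ p) ((X : Polynomial (ZMod p)) ^ p)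
        (Polynomial.C ((X : Polynomial (ZMod p)) ^ 2 - 1) * Polynomial.X - 1)
      = (Polynomial.C ((X : Polynomial (ZMod p)) ^ 2 - 1) * Polynomial.X) ^ p - 1 := by
    unfold substXY
    rw [Polynomial.map_sub, Polynomial.map_mul, Polynomial.map_one, Polynomial.map_C,
      Polynomial.map_X, sub_comp, mul_comp, C_comp, X_comp, one_comp, Polynomial.map_pow,
      Polynomial.map_X]
    have h1 : (aeval ((X : Polynomial (ZMod p)) ^ p)).toRingHom ((X : Polynomial (ZMod p)) ^ 2 - 1)
        = ((X : Polynomial (ZMod p)) ^ p) ^ 2 - 1 := by simp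
    rw [h1, mul_pow, ← C_pow, sub_pow_char, one_pow, ← pow_mul, ← pow_mul]
    ring
  refine ⟨key, ?_, ?_⟩
  · rw [key]
    have h := sub_dvd_pow_sub_pow (Polynomial.C ((X : Polynomial (ZMod p)) ^ 2 - 1) * Polynomial.X) 1 p
    rwa [one_pow] at h
  · rw [key]
    have heq : (Polynomial.C ((X : Polynomial (ZMod p)) ^ 2 - 1) * Polynomial.X) ^ p - 1
        = (Polynomial.C ((X : Polynomial (ZMod p)) ^ 2 - 1) * Polynomial.X - 1) ^ p := by
      rw [sub_pow_char, one_pow]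
    rw [heq]
    set q := Polynomial.C ((X : Polynomial (ZMod p)) ^ 2 - 1) * Polynomial.X - 1 with hq
    have hqu : ¬ IsUnit q := by
      apply Polynomial.not_isUnit_of_degree_pos
      have hX2 : ((X : Polynomial (ZMod p)) ^ 2 - 1) ≠ 0 := by
        intro h
        have := congrArg (Polynomial.coeff · 2) h
        simp [Polynomial.coeff_one] at this
      have : q = Polynomial.C ((X : Polynomial (ZMod p)) ^ 2 - 1) * Polynomial.X + Polynomial.C (-1) := by
        simp [hq, sub_eq_add_neg]
      rw [this, Polynomial.degree_linear hX2]
      norm_num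
    intro hirr
    have h2 : 2 ≤ p := hp.two_le
    have : q ^ p = q * q ^ (p - 1) := by
      rw [← pow_succ']
      congr 1
      omega
    rw [this] at hirr
    rcases hirr.isUnit_or_isUnit rfl with h | h
    · exact hqu h
    · exact hqu ((isUnit_pow_iff (by omega)).mp h)
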